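/- Let Ω, Λ ⊂ ℝ^d be bounded, F ∈ L¹(Ω, ℝ^d), φ ∈ W₀^{1,q}(Ω, ℝ^{d×d}), H satisfying (A2), and (k, l) with l : Λ̄ → ℝ attaining its infimum at u_l ∈ Λ̄ with s_l := −l(u_l), and k = l^# (i.e., k(v) = sup_{u,t>0}(u·v − t l(u) − H(t))). Then ∫_Ω k(F + div φ) dx ≥ L^d(Ω) H*(s_l) − r* ‖F‖_{L¹(Ω)}, where r* bounds sup_{u∈Λ̄}|u| and H* is the Legendre transform of H. -/

import Mathlib

open MeasureTheory Filter
open scoped RealInnerProductSpace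

/-- with `l` attaining its infimum over `Λ̄` at `u_l`,
`s_l = −l(u_l)`, `k = l^#`, `H` satisfying (A2) with Legendre transform `H*`,
`Λ̄ ⊆ B̄(0, r*)`, `F` integrable on `Ω`, and `φ ∈ W₀^{1,q}` (so that the
integral of `div φ` against any constant vector vanishes), one has
`∫_Ω k(F + div φ) ≥ L^d(Ω) H*(s_l) − r* ‖F‖_{L¹(Ω)}`. -/
theorem statement_18 {d : ℕ}
    (Ω Λ : Set (EuclideanSpace ℝ (Fin d)))
    (hΩm : MeasurableSet Ω) (hΩb : Bornology.IsBounded Ω)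
    (hΛb : Bornology.IsBounded Λ) (hΛne : Λ.Nonempty)
    (rstar : ℝ) (hr0 : 0 ≤ rstar) (hr : ∀ u ∈ closure Λ, ‖u‖ ≤ rstar)
    (F Divφ : EuclideanSpace ℝ (Fin d) → EuclideanSpace ℝ (Fin d))
    (hF : IntegrableOn F Ω volume) (hDivφ : IntegrableOn Divφ Ω volume)
    (hdiv0 : ∀ w : EuclideanSpace ℝ (Fin d), (∫ x in Ω, ⟪w, Divφ x⟫) = 0)
    (H H' Hstar : ℝ → ℝ)
    (hderiv : ∀ t ∈ Set.Ioi (0 : ℝ), HasDerivAt H (H' t) t)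
    (hderivCont : ContinuousOn H' (Set.Ioi 0))
    (hHconv : StrictConvexOn ℝ (Set.Ioi 0) H)
    (hlim1 : Tendsto H (nhdsWithin 0 (Set.Ioi 0)) atTop)
    (hlim2 : Tendsto (fun t => H t / t) atTop atTop)
    (hHstar : ∀ s : ℝ, IsLUB {y | ∃ t > (0 : ℝ), y = s * t - H t} (Hstar s))
    (l : EuclideanSpace ℝ (Fin d) → ℝ)
    (ul : EuclideanSpace ℝ (Fin d)) (hul : ul ∈ closure Λ)
    (hmin : ∀ u ∈ closure Λ, l ul ≤ l u)
    (sl : ℝ) (hsl : sl = -l ul)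
    (k : EuclideanSpace ℝ (Fin d) → ℝ)
    (hk : ∀ v, IsLUB
      {y | ∃ u ∈ closure Λ, ∃ t > (0 : ℝ), y = ⟪u, v⟫ - t * l u - H t} (k v))
    (hkint : IntegrableOn (fun x => k (F x + Divφ x)) Ω volume) :
    (volume Ω).toReal * Hstar sl - rstar * ∫ x in Ω, ‖F x‖
      ≤ ∫ x in Ω, k (F x + Divφ x) := by
  have hvol : volume Ω ≠ ⊤ := hΩb.measure_lt_top.ne
  haveI : Fact (volume Ω < ⊤) := ⟨hΩb.measure_lt_top⟩
  -- pointwise key inequality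
  have key : ∀ v, Hstar sl + ⟪ul, v⟫ ≤ k v := by
    intro v
    have hub : ∀ y ∈ {y | ∃ t > (0 : ℝ), y = sl * t - H t}, y ≤ k v - ⟪ul, v⟫ := by
      rintro y ⟨t, ht, rfl⟩
      have hmem : ⟪ul, v⟫ - t * l ul - H t ∈
          {y | ∃ u ∈ closure Λ, ∃ t > (0 : ℝ), y = ⟪u, v⟫ - t * l u - H t} :=
        ⟨ul, hul, t, ht, rfl⟩
      have := (hk v).1 hmem
      rw [hsl]; linarith
    have := (hHstar sl).2 hub
    linarith
  -- integrability of the lower bound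
  have hFi : IntegrableOn (fun x => ⟪ul, F x⟫) Ω volume := hF.const_inner ul
  have hDi : IntegrableOn (fun x => ⟪ul, Divφ x⟫) Ω volume := hDivφ.const_inner ul
  have hlow : IntegrableOn (fun x => Hstar sl + ⟪ul, F x + Divφ x⟫) Ω volume := by
    have : IntegrableOn (fun x => ⟪ul, F x⟫ + ⟪ul, Divφ x⟫) Ω volume := hFi.add hDi
    have h2 : IntegrableOn (fun x => ⟪ul, F x + Divφ x⟫) Ω volume := by
      simpa [inner_add_right] using this
    exact (integrableOn_const hvol).add h2
  have hmono : (∫ x in Ω, (Hstar sl + ⟪ul, F x + Divφ x⟫)) ≤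
      ∫ x in Ω, k (F x + Divφ x) :=
    integral_mono hlow hkint (fun x => key (F x + Divφ x))
  have hsplit : (∫ x in Ω, (Hstar sl + ⟪ul, F x + Divφ x⟫)) =
      (volume Ω).toReal * Hstar sl + ∫ x in Ω, ⟪ul, F x⟫ := by
    rw [integral_add (integrableOn_const (C := Hstar sl) hvol)
      (by have h : Integrable (fun x => ⟪ul, F x⟫ + ⟪ul, Divφ x⟫) (volume.restrict Ω) := hFi.add hDi; simpa [inner_add_right] using h)]
    have : (∫ x in Ω, ⟪ul, F x + Divφ x⟫) = ∫ x in Ω, ⟪ul, F x⟫ := by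
      simp only [inner_add_right]
      rw [integral_add hFi hDi, hdiv0 ul, add_zero]
    rw [this, integral_const]
    simp [mul_comm, Measure.real]
  have hFbound : -(rstar * ∫ x in Ω, ‖F x‖) ≤ ∫ x in Ω, ⟪ul, F x⟫ := by
    have hpt : ∀ x, -(rstar * ‖F x‖) ≤ ⟪ul, F x⟫ := by
      intro x
      have h1 : |⟪ul, F x⟫| ≤ ‖ul‖ * ‖F x‖ := abs_real_inner_le_norm _ _
      have h2 : ‖ul‖ * ‖F x‖ ≤ rstar * ‖F x‖ :=
        mul_le_mul_of_nonneg_right (hr ul hul) (norm_nonneg _)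
      have := neg_abs_le ⟪ul, F x⟫
      linarith [abs_nonneg ⟪ul, F x⟫]
    calc -(rstar * ∫ x in Ω, ‖F x‖) = ∫ x in Ω, -(rstar * ‖F x‖) := by
          rw [integral_neg, integral_const_mul]
      _ ≤ ∫ x in Ω, ⟪ul, F x⟫ :=
          integral_mono ((hF.norm.const_mul rstar).neg) hFi (fun x => hpt x)
  linarith
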